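/- arXiv:1008.4711 — 3 statements merged into one kernel-verified Lean document; each statement's English description precedes it below -/
import Mathlib

section
/- Let β be a complex number with |β| > 1 and k a nonnegative integer. Then the limit as X → ∞ of (1/(X^k β^X)) · (∑_{N=1}^{X} N^k β^N) equals β/(β−1). -/
open Filter Finset

theorem series_limit (β : ℂ) (hβ : 1 < ‖β‖) (k : ℕ) :
    Tendsto (fun X : ℕ => (1 / ((X : ℂ) ^ k * β ^ X)) * ∑ N ∈ Finset.Icc 1 X, (N : ℂ) ^ k * β ^ N)
      atTop (nhds (β / (β - 1))) := by
  have hβ0 : β ≠ 0 := by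
    intro h; rw [h] at hβ; simp at hβ; linarith
  have hβ1 : β - 1 ≠ 0 := by
    intro h
    have : β = 1 := by linear_combination h
    rw [this] at hβ; simp at hβ
  have habs : (0:ℝ) < ‖β‖ := by linarith
  have hnorm : ‖(1/β : ℂ)‖ < 1 := by
    rw [norm_div, norm_one]
    exact (div_lt_one habs).mpr hβ
  set f : ℕ → ℕ → ℂ := fun X j =>
    if j < X then (((X - j : ℕ) : ℂ) / X) ^ k * (1/β) ^ j else 0 with hf
  have hg : ∑' j : ℕ, (1/β : ℂ) ^ j = β / (β - 1) := by
    rw [tsum_geometric_of_norm_lt_one hnorm]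
    have : (1 : ℂ) - 1/β = (β - 1)/β := by field_simp
    rw [this, inv_div]
  have h_sum : Summable (fun j : ℕ => ((‖β‖)⁻¹) ^ j) := by
    refine summable_geometric_of_lt_one (by positivity) ?_
    rw [inv_lt_one_iff₀]; right; exact hβ
  have hab : ∀ j : ℕ, Tendsto (fun X => f X j) atTop (nhds ((1/β : ℂ) ^ j)) := by
    intro j
    have h1 : Tendsto (fun X : ℕ => (j : ℂ) / X) atTop (nhds 0) := by
      have h0 := tendsto_const_div_atTop_nhds_zero_nat (j : ℝ)
      have h2 := (Complex.continuous_ofReal.tendsto 0).comp h0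
      refine Tendsto.congr ?_ (by simpa using h2)
      intro n
      simp [Function.comp]
    have h2 : Tendsto (fun X : ℕ => (1 - (j : ℂ)/X) ^ k * (1/β) ^ j) atTop
        (nhds ((1/β : ℂ) ^ j)) := by
      have := (((tendsto_const_nhds (x := (1:ℂ))).sub h1).pow k).mul_const ((1/β : ℂ) ^ j)
      simpa using this
    refine h2.congr' ?_
    filter_upwards [eventually_ge_atTop (j+1)] with X hX
    have hjX : j < X := hX
    have hX0 : (X : ℂ) ≠ 0 := Nat.cast_ne_zero.mpr (by omega)
    simp only [hf, if_pos hjX]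
    congr 1
    rw [Nat.cast_sub hjX.le, sub_div, div_self hX0]
  have h_bound : ∀ X : ℕ, ∀ j : ℕ, ‖f X j‖ ≤ ((‖β‖)⁻¹) ^ j := by
    intro X j
    by_cases h : j < X
    · simp only [hf, if_pos h]
      rw [norm_mul, norm_pow, norm_pow, norm_div, norm_div, norm_one,
        Complex.norm_natCast, Complex.norm_natCast]
      have h1 : ((X - j : ℕ) : ℝ) / (X : ℝ) ≤ 1 := by
        rw [div_le_one (by exact_mod_cast Nat.pos_of_ne_zero (by omega))]
        exact_mod_cast Nat.sub_le X j
      have h2 : (0:ℝ) ≤ ((X - j : ℕ) : ℝ) / (X : ℝ) := by positivity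
      have h3 : (((X - j : ℕ) : ℝ) / (X : ℝ)) ^ k ≤ 1 := pow_le_one₀ h2 h1
      have h4 : (0:ℝ) ≤ (1 / ‖β‖) ^ j := by positivity
      have := mul_le_of_le_one_left h4 h3
      simpa [one_div] using this
    · simp only [hf, if_neg h, norm_zero]
      positivity
  have main : Tendsto (fun X => ∑' j, f X j) atTop (nhds (β / (β - 1))) := by
    rw [← hg]
    exact tendsto_tsum_of_dominated_convergence h_sum hab (Eventually.of_forall h_bound)
  refine main.congr' ?_
  filter_upwards [eventually_ge_atTop 1] with X hX
  have hX0 : (X : ℂ) ≠ 0 := Nat.cast_ne_zero.mpr (by omega)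
  have step1 : ∑' j, f X j = ∑ j ∈ Finset.range X, f X j := by
    refine tsum_eq_sum ?_
    intro j hj
    rw [Finset.mem_range, not_lt] at hj
    simp [hf, Nat.not_lt.mpr hj]
  have step2 : ∀ j ∈ Finset.range X,
      f X j = (1 / ((X : ℂ) ^ k * β ^ X)) * (((X - j : ℕ) : ℂ) ^ k * β ^ (X - j)) := by
    intro j hj
    rw [Finset.mem_range] at hj
    simp only [hf, if_pos hj]
    have hb : β ^ (X - j) * β ^ j = β ^ X := by
      rw [← pow_add]; congr 1; omega
    rw [div_pow]
    field_simp
    rw [← hb]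
    rw [one_div, inv_pow, mul_comm (β ^ (X - j)), ← mul_assoc, mul_assoc _ _ (β ^ j),
      inv_mul_cancel₀ (pow_ne_zero j hβ0), mul_one]
  have step3 : ∑ j ∈ Finset.range X, (((X - j : ℕ) : ℂ) ^ k * β ^ (X - j))
      = ∑ N ∈ Finset.Icc 1 X, (N : ℂ) ^ k * β ^ N := by
    refine Finset.sum_nbij' (fun j => X - j) (fun N => X - N) ?_ ?_ ?_ ?_ ?_
    · intro j hj; rw [Finset.mem_range] at hj; rw [Finset.mem_Icc]; omega
    · intro N hN; rw [Finset.mem_Icc] at hN; rw [Finset.mem_range]; omega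
    · intro j hj; rw [Finset.mem_range] at hj; omega
    · intro N hN; rw [Finset.mem_Icc] at hN; omega
    · intro j hj; rfl
  rw [step1, Finset.sum_congr rfl step2, ← Finset.mul_sum, step3]
end

section
/- Let θ_1, …, θ_N be real numbers and define Z(θ) = ∏_{j=1}^{N} (1 − e^{i(θ_j − θ)})(1 − e^{i(−θ_j − θ)}) as a function of θ ∈ ℝ. Then for each j with 1 ≤ j ≤ N, the derivative satisfies |Z'(θ_j)| = 2^N · |sin θ_j| · ∏_{k ≠ j} |cos θ_j − cos θ_k|. -/
open Finset

open Finset Complex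

lemma hasDerivAt_one_sub_exp (z : ℂ) (x : ℝ) :
    HasDerivAt (fun θ : ℝ => 1 - Complex.exp (Complex.I * (z - θ)))
      (Complex.I * Complex.exp (Complex.I * (z - x))) x := by
  have h0 : HasDerivAt (fun θ : ℝ => (θ : ℂ)) 1 x := by
    simpa using (hasDerivAt_id x).ofReal_comp
  have h1 : HasDerivAt (fun θ : ℝ => Complex.I * (z - θ)) (-Complex.I) x := by
    have := ((hasDerivAt_const x z).sub h0).const_mul Complex.I
    simpa using this
  have h3 := (hasDerivAt_const x (1 : ℂ)).fun_sub h1.cexp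
  exact h3.congr_deriv (by ring)

lemma exp_neg_mul_I_abs (t : ℝ) : ‖(Complex.exp (-(t : ℂ) * Complex.I))‖ = 1 := by
  rw [show (-(t:ℂ)) = ((-t : ℝ) : ℂ) by push_cast; ring]
  exact Complex.norm_exp_ofReal_mul_I _

lemma two_cos_eq (t : ℝ) :
    Complex.exp ((t : ℂ) * Complex.I) + Complex.exp (-(t : ℂ) * Complex.I)
      = 2 * (Real.cos t : ℂ) := by
  rw [Complex.exp_mul_I, show (-(t:ℂ)) * Complex.I = (-(t:ℂ)) * Complex.I from rfl,
    Complex.exp_mul_I, Complex.cos_neg, Complex.sin_neg, Complex.ofReal_cos]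
  ring

lemma two_sin_eq (t : ℝ) :
    Complex.exp ((t : ℂ) * Complex.I) - Complex.exp (-(t : ℂ) * Complex.I)
      = 2 * (Real.sin t : ℂ) * Complex.I := by
  rw [Complex.exp_mul_I, Complex.exp_mul_I, Complex.cos_neg, Complex.sin_neg,
    Complex.ofReal_sin]
  ring

lemma factor_identity (t a : ℝ) :
    (1 - Complex.exp (Complex.I * ((a : ℂ) - t))) *
      (1 - Complex.exp (Complex.I * (-(a : ℂ) - t))) =
    Complex.exp (-(t : ℂ) * Complex.I) * (2 * ((Real.cos t : ℂ) - (Real.cos a : ℂ))) := by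
  have e1 : Complex.exp (Complex.I * ((a : ℂ) - t))
      = Complex.exp ((a : ℂ) * Complex.I) * Complex.exp (-(t : ℂ) * Complex.I) := by
    rw [← Complex.exp_add]; congr 1; ring
  have e2 : Complex.exp (Complex.I * (-(a : ℂ) - t))
      = Complex.exp (-(a : ℂ) * Complex.I) * Complex.exp (-(t : ℂ) * Complex.I) := by
    rw [← Complex.exp_add]; congr 1; ring
  have hx : Complex.exp ((a : ℂ) * Complex.I) * Complex.exp (-(a : ℂ) * Complex.I) = 1 := by
    rw [← Complex.exp_add]; simp
  have hy : Complex.exp ((t : ℂ) * Complex.I) * Complex.exp (-(t : ℂ) * Complex.I) = 1 := by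
    rw [← Complex.exp_add]; simp
  rw [e1, e2]
  linear_combination (Complex.exp (-(t : ℂ) * Complex.I))^2 * hx - hy
    + (Complex.exp (-(t : ℂ) * Complex.I)) * two_cos_eq t
    - (Complex.exp (-(t : ℂ) * Complex.I)) * two_cos_eq a

lemma abs_factor (t a : ℝ) :
    ‖((1 - Complex.exp (Complex.I * ((a : ℂ) - t))) *
      (1 - Complex.exp (Complex.I * (-(a : ℂ) - t))))‖
      = 2 * |Real.cos t - Real.cos a| := by
  rw [factor_identity, norm_mul, exp_neg_mul_I_abs, one_mul]
  rw [show (2 * ((Real.cos t : ℂ) - (Real.cos a : ℂ))) = ((2 * (Real.cos t - Real.cos a) : ℝ) : ℂ)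
    by push_cast; ring]
  rw [Complex.norm_real, Real.norm_eq_abs, abs_mul]
  simp

lemma sin_identity (t : ℝ) :
    1 - Complex.exp (Complex.I * (-(t : ℂ) - t)) =
    Complex.exp (-(t : ℂ) * Complex.I) * (2 * (Real.sin t : ℂ) * Complex.I) := by
  have e2 : Complex.exp (Complex.I * (-(t : ℂ) - t))
      = Complex.exp (-(t : ℂ) * Complex.I) * Complex.exp (-(t : ℂ) * Complex.I) := by
    rw [← Complex.exp_add]; congr 1; ring
  have hy : Complex.exp ((t : ℂ) * Complex.I) * Complex.exp (-(t : ℂ) * Complex.I) = 1 := by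
    rw [← Complex.exp_add]; simp
  rw [e2]
  linear_combination (Complex.exp (-(t : ℂ) * Complex.I)) * two_sin_eq t - hy

lemma abs_sin_factor (t : ℝ) :
    ‖(1 - Complex.exp (Complex.I * (-(t : ℂ) - t)))‖ = 2 * |Real.sin t| := by
  rw [sin_identity, norm_mul, exp_neg_mul_I_abs, one_mul, norm_mul, Complex.norm_I, mul_one,
    show (2 * (Real.sin t : ℂ)) = ((2 * Real.sin t : ℝ) : ℂ) by push_cast; ring,
    Complex.norm_real, Real.norm_eq_abs, abs_mul]
  simp

theorem abs_deriv_char_poly (N : ℕ) (hN : 0 < N) (θs : Fin N → ℝ) (j : Fin N) :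
    ‖(deriv (fun θ : ℝ => ∏ k : Fin N,
        ((1 - Complex.exp (Complex.I * ((θs k : ℂ) - (θ : ℂ)))) *
          (1 - Complex.exp (Complex.I * (-(θs k : ℂ) - (θ : ℂ)))))) (θs j))‖ =
    2 ^ N * |Real.sin (θs j)| *
      ∏ k ∈ Finset.univ.erase j, |Real.cos (θs j) - Real.cos (θs k)| := by
  set t := θs j with ht
  set f : Fin N → ℝ → ℂ := fun k θ =>
    (1 - Complex.exp (Complex.I * ((θs k : ℂ) - (θ : ℂ)))) *
      (1 - Complex.exp (Complex.I * (-(θs k : ℂ) - (θ : ℂ)))) with hf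
  set g : ℝ → ℂ := fun θ => 1 - Complex.exp (Complex.I * ((t : ℂ) - θ)) with hg
  set h : ℝ → ℂ := fun θ =>
    (1 - Complex.exp (Complex.I * (-(t : ℂ) - θ))) * ∏ k ∈ univ.erase j, f k θ with hh
  have hsplit : (fun θ : ℝ => ∏ k : Fin N, f k θ) = fun θ => g θ * h θ := by
    funext θ
    rw [← Finset.mul_prod_erase _ _ (Finset.mem_univ j)]
    simp only [hf, hg, hh, ht]
    ring
  have hdg : HasDerivAt g Complex.I t := by
    have := hasDerivAt_one_sub_exp (t : ℂ) t
    simpa using this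
  have hdiff_f : ∀ k, DifferentiableAt ℝ (f k) t := fun k =>
    ((hasDerivAt_one_sub_exp _ t).differentiableAt).mul
      ((hasDerivAt_one_sub_exp _ t).differentiableAt)
  have hdh : DifferentiableAt ℝ h t :=
    ((hasDerivAt_one_sub_exp _ t).differentiableAt).mul
      (DifferentiableAt.fun_finsetProd fun k _ => hdiff_f k)
  have hg0 : g t = 0 := by simp [hg]
  have hderiv : deriv (fun θ : ℝ => ∏ k : Fin N, f k θ) t = Complex.I * h t := by
    rw [hsplit, deriv_fun_mul hdg.differentiableAt hdh, hdg.deriv, hg0, zero_mul, add_zero]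
  rw [hderiv, norm_mul, Complex.norm_I, one_mul, hh, norm_mul, abs_sin_factor, Complex.norm_prod]
  have hprod : ∏ k ∈ univ.erase j, ‖(f k t)‖
      = ∏ k ∈ univ.erase j, 2 * |Real.cos t - Real.cos (θs k)| := by
    refine Finset.prod_congr rfl fun k _ => ?_
    exact abs_factor t (θs k)
  rw [hprod, Finset.prod_mul_distrib, Finset.prod_const,
    Finset.card_erase_of_mem (Finset.mem_univ j), Finset.card_univ, Fintype.card_fin]
  have h2 : (2 : ℝ) * 2 ^ (N - 1) = 2 ^ N := by
    rw [← pow_succ']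
    congr 1
    omega
  ring_nf
  rw [← h2]
  ring
end

section
/- Andréief's identity: for measurable functions f_1, …, f_N, g_1, …, g_N and a weight w on an interval X ⊆ ℝ (with all products f_j g_k w integrable on X), one has (1/N!) ∫_{X^N} det[f_j(x_k)]_{j,k} · det[g_j(x_k)]_{j,k} · ∏_{j=1}^{N} w(x_j) dx_1 ⋯ dx_N = det[ ∫_X f_j(x) g_k(x) w(x) dx ]_{j,k}. -/
open MeasureTheory Finset

private lemma restrict_pi_aux (N : ℕ) (X : Set ℝ) (hX : MeasurableSet X) :
    (volume : Measure (Fin N → ℝ)).restrict (Set.univ.pi fun _ => X) =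
      Measure.pi (fun _ : Fin N => volume.restrict X) := by
  refine (Measure.pi_eq fun s hs => ?_).symm
  rw [Measure.restrict_apply (MeasurableSet.univ_pi hs), ← Set.pi_inter_distrib,
    volume_pi_pi]
  simp_rw [Measure.restrict_apply (hs _)]

private lemma integral_pi_prod' {ι : Type*} [Fintype ι] {α : Type*} [MeasurableSpace α]
    (μ : Measure α) [SigmaFinite μ] (f : ι → α → ℝ) :
    ∫ x : ι → α, ∏ i, f i (x i) ∂Measure.pi (fun _ => μ) = ∏ i, ∫ x, f i x ∂μ := by
  letI : MeasureSpace α := ⟨μ⟩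
  exact integral_fintype_prod_eq_prod f

private lemma integrable_pi_prod' {ι : Type*} [Fintype ι] {α : Type*} [MeasurableSpace α]
    (μ : Measure α) [SigmaFinite μ] (f : ι → α → ℝ) (hf : ∀ i, Integrable (f i) μ) :
    Integrable (fun x : ι → α => ∏ i, f i (x i)) (Measure.pi (fun _ => μ)) := by
  letI : MeasureSpace α := ⟨μ⟩
  exact Integrable.fintype_prod hf

theorem andreief_identity (N : ℕ) (hN : 0 < N) (X : Set ℝ) (hX : MeasurableSet X)
    (f g : Fin N → ℝ → ℝ) (w : ℝ → ℝ)
    (hint : ∀ j k : Fin N, IntegrableOn (fun x => f j x * g k x * w x) X) :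
    (1 / (N.factorial : ℝ)) *
      ∫ x : Fin N → ℝ in Set.univ.pi (fun _ => X),
        (Matrix.det (Matrix.of fun j k : Fin N => f j (x k))) *
          (Matrix.det (Matrix.of fun j k : Fin N => g j (x k))) *
          ∏ j : Fin N, w (x j) =
    Matrix.det (Matrix.of fun j k : Fin N => ∫ x in X, f j x * g k x * w x) := by
  classical
  set A : Matrix (Fin N) (Fin N) ℝ :=
    Matrix.of fun j k : Fin N => ∫ x in X, f j x * g k x * w x with hA
  set μ : Measure ℝ := volume.restrict X with hμ
  -- rewrite the set integral as an integral w.r.t. the product of restricted measures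
  have hres : ∀ F : (Fin N → ℝ) → ℝ,
      (∫ x : Fin N → ℝ in Set.univ.pi (fun _ => X), F x) =
      ∫ x : Fin N → ℝ, F x ∂Measure.pi (fun _ : Fin N => μ) := by
    intro F
    rw [← restrict_pi_aux N X hX]
  rw [hres]
  -- expand both determinants
  have hexp : ∀ x : Fin N → ℝ,
      (Matrix.det (Matrix.of fun j k : Fin N => f j (x k))) *
        (Matrix.det (Matrix.of fun j k : Fin N => g j (x k))) *
        ∏ j : Fin N, w (x j) =
      ∑ σ : Equiv.Perm (Fin N), ∑ τ : Equiv.Perm (Fin N),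
        ((Equiv.Perm.sign σ : ℤ) : ℝ) * ((Equiv.Perm.sign τ : ℤ) : ℝ) *
          ∏ k : Fin N, (f (σ k) (x k) * g (τ k) (x k) * w (x k)) := by
    intro x
    rw [Matrix.det_apply, Matrix.det_apply, Finset.sum_mul_sum, Finset.sum_mul]
    refine Finset.sum_congr rfl fun σ _ => ?_
    rw [Finset.sum_mul]
    refine Finset.sum_congr rfl fun τ _ => ?_
    simp only [Matrix.of_apply, Units.smul_def, zsmul_eq_mul]
    rw [Finset.prod_mul_distrib, Finset.prod_mul_distrib]
    ring
  simp_rw [hexp]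
  have hint' : ∀ σ τ : Equiv.Perm (Fin N),
      Integrable (fun x : Fin N → ℝ =>
        ∏ k : Fin N, (f (σ k) (x k) * g (τ k) (x k) * w (x k)))
        (Measure.pi (fun _ : Fin N => μ)) :=
    fun σ τ => integrable_pi_prod' μ _ (fun k => hint (σ k) (τ k))
  rw [integral_finset_sum _ (fun σ _ => integrable_finset_sum _
    (fun τ _ => ((hint' σ τ).const_mul _)))]
  have hstep : ∀ σ : Equiv.Perm (Fin N),
      (∫ x : Fin N → ℝ, ∑ τ : Equiv.Perm (Fin N),
        ((Equiv.Perm.sign σ : ℤ) : ℝ) * ((Equiv.Perm.sign τ : ℤ) : ℝ) *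
          ∏ k : Fin N, (f (σ k) (x k) * g (τ k) (x k) * w (x k))
        ∂Measure.pi (fun _ : Fin N => μ)) =
      ∑ τ : Equiv.Perm (Fin N),
        ((Equiv.Perm.sign σ : ℤ) : ℝ) * ((Equiv.Perm.sign τ : ℤ) : ℝ) *
          ∏ k : Fin N, (∫ x, f (σ k) x * g (τ k) x * w x ∂μ) := by
    intro σ
    rw [integral_finset_sum _ (fun τ _ => ((hint' σ τ).const_mul _))]
    refine Finset.sum_congr rfl fun τ _ => ?_
    rw [integral_const_mul]
    congr 1
    exact integral_pi_prod' μ (fun k y => f (σ k) y * g (τ k) y * w y)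
  simp_rw [hstep]
  rw [Finset.sum_comm]
  -- combinatorial part
  have key : ∀ τ : Equiv.Perm (Fin N),
      ∑ σ : Equiv.Perm (Fin N),
        ((Equiv.Perm.sign σ : ℤ) : ℝ) * ((Equiv.Perm.sign τ : ℤ) : ℝ) *
          ∏ k : Fin N, (∫ x, f (σ k) x * g (τ k) x * w x ∂μ) = A.det := by
    intro τ
    show ∑ σ : Equiv.Perm (Fin N),
        ((Equiv.Perm.sign σ : ℤ) : ℝ) * ((Equiv.Perm.sign τ : ℤ) : ℝ) *
          ∏ k : Fin N, A (σ k) (τ k) = A.det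
    rw [← Equiv.sum_comp (Equiv.mulRight τ)
      (fun σ => ((Equiv.Perm.sign σ : ℤ) : ℝ) * ((Equiv.Perm.sign τ : ℤ) : ℝ) *
        ∏ k : Fin N, A (σ k) (τ k)), Matrix.det_apply]
    refine Finset.sum_congr rfl fun π _ => ?_
    have h1 : ∏ k : Fin N, A ((Equiv.mulRight τ π) k) (τ k) = ∏ m : Fin N, A (π m) m := by
      simpa using Equiv.prod_comp τ (fun m => A (π m) m)
    have h2 : ((Equiv.Perm.sign (Equiv.mulRight τ π) : ℤ) : ℝ) =
        ((Equiv.Perm.sign π : ℤ) : ℝ) * ((Equiv.Perm.sign τ : ℤ) : ℝ) := by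
      simp [Equiv.Perm.sign_mul]
    have h3 : ((Equiv.Perm.sign τ : ℤ) : ℝ) * ((Equiv.Perm.sign τ : ℤ) : ℝ) = 1 := by
      rcases Int.units_eq_one_or (Equiv.Perm.sign τ) with h | h <;> simp [h]
    rw [h1, h2, Units.smul_def, zsmul_eq_mul]
    linear_combination (((Equiv.Perm.sign π : ℤ) : ℝ) * ∏ m : Fin N, A (π m) m) * h3
  simp_rw [key]
  rw [Finset.sum_const, Finset.card_univ, Fintype.card_perm, Fintype.card_fin, nsmul_eq_mul]
  have : (N.factorial : ℝ) ≠ 0 := Nat.cast_ne_zero.mpr (Nat.factorial_ne_zero N)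
  field_simp
end
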